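/- There is no completely regular code with intersection array {36,28,4; 1,2,24} in any Hamming graph H(n,q) with q ∈ {2,3,4,5,7,10,13} and (q−1)n = 36, because in each case the matrix K_3(K_1^{-1}(S)) has a non-integer entry, where S is the 4×4 tridiagonal quotient matrix determined by the array. -/

import Mathlib

open SimpleGraph

/-- The Hamming graph `H(n, α)`: vertices are `n`-tuples over `α`, adjacent iff
Hamming distance `1`. -/
def hammingGraph (n : ℕ) (α : Type*) [DecidableEq α] : SimpleGraph (Fin n → α) where
  Adj x y := hammingDist x y = 1
  symm := by constructor; intro x y h; exact (hammingDist_comm y x).trans h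
  loopless := by constructor; intro x h; simp [hammingDist_self] at h

/-- Distance from a vertex to a set of vertices. -/
noncomputable def distTo {V : Type*} (Γ : SimpleGraph V) (C : Set V) (v : V) : ℕ :=
  sInf (Γ.dist v '' C)

/-- `C` is a completely regular code of covering radius `ρ` with intersection array
`{β 0, …, β (ρ-1); γ 1, …, γ ρ}`: the distance partition of `C` is equitable with the
corresponding tridiagonal quotient matrix. -/
def IsCompletelyRegular {V : Type*} (Γ : SimpleGraph V) (C : Set V) (ρ : ℕ)
    (β γ : ℕ → ℕ) : Prop :=
  C.Nonempty ∧
  (∀ v, distTo Γ C v ≤ ρ) ∧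
  (∃ v, distTo Γ C v = ρ) ∧
  (∀ v t, distTo Γ C v = t → t < ρ →
    {u | Γ.Adj v u ∧ distTo Γ C u = t + 1}.ncard = β t) ∧
  (∀ v t, distTo Γ C v = t → 0 < t →
    {u | Γ.Adj v u ∧ distTo Γ C u = t - 1}.ncard = γ t)

/-- `Γ` is a distance-regular graph of diameter `D` with intersection numbers
`b 0, …, b (D-1)` and `c 1, …, c D`. -/
def IsDistanceRegular {V : Type*} (Γ : SimpleGraph V) (D : ℕ) (b c : ℕ → ℕ) : Prop :=
  Γ.Connected ∧
  (∀ u v, Γ.dist u v ≤ D) ∧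
  (∃ u v, Γ.dist u v = D) ∧
  (∀ u v i, Γ.dist u v = i → i < D →
    {w | Γ.Adj v w ∧ Γ.dist u w = i + 1}.ncard = b i) ∧
  (∀ u v i, Γ.dist u v = i → 0 < i →
    {w | Γ.Adj v w ∧ Γ.dist u w = i - 1}.ncard = c i)

namespace CRCAux

open Finset

variable {n q : ℕ}

lemma filter_update (x y : Fin n → Fin q) (i : Fin n) (a : Fin q) :
    ({j | Function.update x i a j ≠ y j} : Finset (Fin n))
      = if a = y i then ({j | x j ≠ y j} : Finset (Fin n)).erase i
        else insert i (({j | x j ≠ y j} : Finset (Fin n)).erase i) := by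
  split_ifs with h <;> ext j <;> by_cases hj : j = i <;>
    simp [Function.update_apply, hj, h]

lemma hammingDist_update_of_eq {x y : Fin n → Fin q} {i : Fin n} {a : Fin q}
    (h : x i = y i) (ha : a ≠ y i) :
    hammingDist (Function.update x i a) y = hammingDist x y + 1 := by
  unfold hammingDist
  rw [filter_update, if_neg ha]
  have hi : i ∉ ({j | x j ≠ y j} : Finset (Fin n)) := by simp [h]
  rw [Finset.erase_eq_of_notMem hi, Finset.card_insert_of_notMem hi]

lemma hammingDist_update_of_ne_eq {x y : Fin n → Fin q} {i : Fin n} {a : Fin q}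
    (h : x i ≠ y i) (ha : a = y i) :
    hammingDist (Function.update x i a) y + 1 = hammingDist x y := by
  unfold hammingDist
  rw [filter_update, if_pos ha]
  have hi : i ∈ ({j | x j ≠ y j} : Finset (Fin n)) := by simp [h]
  rw [Finset.card_erase_of_mem hi]
  have : 1 ≤ #{j | x j ≠ y j} := Finset.card_pos.2 ⟨i, hi⟩
  omega

lemma hammingDist_update_of_ne_ne {x y : Fin n → Fin q} {i : Fin n} {a : Fin q}
    (h : x i ≠ y i) (ha : a ≠ y i) :
    hammingDist (Function.update x i a) y = hammingDist x y := by
  unfold hammingDist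
  rw [filter_update, if_neg ha]
  have hi : i ∈ ({j | x j ≠ y j} : Finset (Fin n)) := by simp [h]
  rw [Finset.card_insert_of_notMem (Finset.notMem_erase i _), Finset.card_erase_of_mem hi]
  have : 1 ≤ #{j | x j ≠ y j} := Finset.card_pos.2 ⟨i, hi⟩
  omega

lemma hammingDist_update_self {x : Fin n → Fin q} {i : Fin n} {a : Fin q} (ha : a ≠ x i) :
    hammingDist x (Function.update x i a) = 1 := by
  rw [hammingDist_comm]
  have := hammingDist_update_of_eq (x := x) (y := x) (i := i) rfl ha
  simpa [hammingDist_self] using this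

lemma exists_update_of_hammingDist_one {x u : Fin n → Fin q} (h : hammingDist x u = 1) :
    ∃ i a, a ≠ x i ∧ u = Function.update x i a := by
  unfold hammingDist at h
  obtain ⟨i, hi⟩ := Finset.card_eq_one.1 h
  have hi' : i ∈ ({j | x j ≠ u j} : Finset (Fin n)) := hi ▸ Finset.mem_singleton_self i
  have hxi : x i ≠ u i := by simpa using hi'
  refine ⟨i, u i, fun h' => hxi h'.symm, ?_⟩
  funext j
  by_cases hj : j = i
  · subst hj; simp [Function.update_apply]
  · have : j ∉ ({j | x j ≠ u j} : Finset (Fin n)) := by rw [hi]; simpa using hj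
    have hxj : x j = u j := by simpa using this
    simp [Function.update_apply, hj, hxj.symm]

lemma card_nbr (v : Fin n → Fin q) (p : (Fin n → Fin q) → Prop) [DecidablePred p] :
    #{u | hammingDist v u = 1 ∧ p u}
      = ∑ i : Fin n, #{a : Fin q | a ≠ v i ∧ p (Function.update v i a)} := by
  classical
  rw [← Finset.card_sigma]
  refine (Finset.card_bij (fun x _ => Function.update v x.1 x.2) ?_ ?_ ?_).symm
  · rintro ⟨i, a⟩ hx
    simp only [Finset.mem_sigma, Finset.mem_filter, Finset.mem_univ, true_and] at hx ⊢
    exact ⟨hammingDist_update_self hx.1, hx.2⟩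
  · rintro ⟨i, a⟩ hx ⟨i', a'⟩ hx' heq
    simp only [Finset.mem_sigma, Finset.mem_filter, Finset.mem_univ, true_and] at hx hx'
    by_cases hii : i = i'
    · subst hii
      have : Function.update v i a i = Function.update v i a' i := by
        simp only at heq; rw [heq]
      simp only [Function.update_self] at this
      simp [this]
    · exfalso
      have : Function.update v i a i = Function.update v i' a' i := by
        simp only at heq; rw [heq]
      rw [Function.update_self, Function.update_of_ne hii] at this
      exact hx.1 this
  · intro u hu
    simp only [Finset.mem_filter, Finset.mem_univ, true_and] at hu
    obtain ⟨i, a, ha, rfl⟩ := exists_update_of_hammingDist_one hu.1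
    exact ⟨⟨i, a⟩, by simpa [ha] using hu.2, rfl⟩

lemma card_fin_ne (x : Fin q) : #{a : Fin q | a ≠ x} = q - 1 := by
  rw [Finset.filter_ne' Finset.univ x, Finset.card_erase_of_mem (Finset.mem_univ x)]
  simp

lemma card_fin_ne_ne {x y : Fin q} (hxy : x ≠ y) :
    #{a : Fin q | a ≠ x ∧ a ≠ y} = q - 2 := by
  have h : ({a : Fin q | a ≠ x ∧ a ≠ y} : Finset (Fin q)) = (Finset.univ.erase x).erase y := by
    ext a; simp [and_comm]
  have hy : y ∈ Finset.univ.erase x :=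
    Finset.mem_erase.2 ⟨fun h => hxy h.symm, Finset.mem_univ y⟩
  rw [h, Finset.card_erase_of_mem hy, Finset.card_erase_of_mem (Finset.mem_univ x),
    Finset.card_univ, Fintype.card_fin]
  omega

lemma card_nbr_dist (v c : Fin n → Fin q) (w : ℕ) :
    #{u | hammingDist v u = 1 ∧ hammingDist u c = w}
      = (if hammingDist v c + 1 = w then (n - hammingDist v c) * (q - 1) else 0)
        + (if hammingDist v c = w + 1 then hammingDist v c else 0)
        + (if hammingDist v c = w then hammingDist v c * (q - 2) else 0) := by
  classical
  set d := hammingDist v c with hd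
  rw [card_nbr]
  have key : ∀ i : Fin n,
      #{a : Fin q | a ≠ v i ∧ hammingDist (Function.update v i a) c = w}
        = if v i = c i then (if d + 1 = w then q - 1 else 0)
          else ((if d = w + 1 then 1 else 0) + (if d = w then q - 2 else 0)) := by
    intro i
    by_cases hvc : v i = c i
    · rw [if_pos hvc]
      by_cases hw : d + 1 = w
      · rw [if_pos hw, ← card_fin_ne (v i)]
        congr 1
        ext a
        simp only [Finset.mem_filter, Finset.mem_univ, true_and, and_iff_left_iff_imp]
        intro ha
        rw [hammingDist_update_of_eq hvc (hvc ▸ ha), ← hd, hw]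
      · rw [if_neg hw]
        rw [Finset.card_eq_zero]
        ext a
        simp only [Finset.mem_filter, Finset.mem_univ, true_and, Finset.notMem_empty,
          iff_false, not_and]
        intro ha hdist
        exact hw (by rw [← hdist, hammingDist_update_of_eq hvc (hvc ▸ ha), hd])
    · rw [if_neg hvc]
      have hsplit : ({a : Fin q | a ≠ v i ∧ hammingDist (Function.update v i a) c = w} :
          Finset (Fin q))
          = ({a : Fin q | (a ≠ v i ∧ a = c i) ∧ hammingDist (Function.update v i a) c = w} :
              Finset (Fin q))
            ∪ ({a : Fin q | (a ≠ v i ∧ a ≠ c i) ∧ hammingDist (Function.update v i a) c = w} :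
              Finset (Fin q)) := by
        ext a; by_cases hac : a = c i <;> simp [hac] <;> tauto
      rw [hsplit, Finset.card_union_of_disjoint]
      · congr 1
        · by_cases hw : d = w + 1
          · rw [if_pos hw]
            have : ({a : Fin q | (a ≠ v i ∧ a = c i) ∧
                hammingDist (Function.update v i a) c = w} : Finset (Fin q)) = {c i} := by
              ext a
              simp only [Finset.mem_filter, Finset.mem_univ, true_and, Finset.mem_singleton]
              constructor
              · rintro ⟨⟨_, h⟩, _⟩; exact h
              · rintro rfl
                refine ⟨⟨fun h => hvc h.symm, rfl⟩, ?_⟩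
                have := hammingDist_update_of_ne_eq hvc (rfl : c i = c i)
                omega
            rw [this, Finset.card_singleton]
          · rw [if_neg hw, Finset.card_eq_zero]
            ext a
            simp only [Finset.mem_filter, Finset.mem_univ, true_and, Finset.notMem_empty,
              iff_false, not_and]
            rintro ⟨hav, hac⟩ hdist
            have := hammingDist_update_of_ne_eq hvc hac
            omega
        · by_cases hw : d = w
          · rw [if_pos hw, ← card_fin_ne_ne (show v i ≠ c i from hvc)]
            congr 1
            ext a
            simp only [Finset.mem_filter, Finset.mem_univ, true_and]
            constructor
            · rintro ⟨h, _⟩; exact h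
            · rintro ⟨hav, hac⟩
              exact ⟨⟨hav, hac⟩, by rw [hammingDist_update_of_ne_ne hvc hac, ← hd, hw]⟩
          · rw [if_neg hw, Finset.card_eq_zero]
            ext a
            simp only [Finset.mem_filter, Finset.mem_univ, true_and, Finset.notMem_empty,
              iff_false, not_and]
            rintro ⟨hav, hac⟩ hdist
            rw [hammingDist_update_of_ne_ne hvc hac, ← hd] at hdist
            exact hw hdist
      · rw [Finset.disjoint_left]
        intro a ha ha'
        simp only [Finset.mem_filter, Finset.mem_univ, true_and] at ha ha'
        exact ha'.1.2 ha.1.2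
  rw [Finset.sum_congr rfl fun i _ => key i, Finset.sum_ite, Finset.sum_const,
    Finset.sum_const]
  have hcard1 : #{i : Fin n | v i = c i} = n - d := by
    have h2 : #{i : Fin n | ¬ v i = c i} = d := rfl
    have := Finset.card_filter_add_card_filter_not
      (s := (Finset.univ : Finset (Fin n))) (p := fun i => v i = c i)
    simp only [Finset.card_univ, Fintype.card_fin] at this
    omega
  have hcard2 : #{i : Fin n | ¬ v i = c i} = d := rfl
  rw [hcard1, hcard2, smul_eq_mul, smul_eq_mul]
  have hdn : d ≤ n := by
    have h1 : ({i | v i ≠ c i} : Finset (Fin n)) ⊆ Finset.univ := Finset.subset_univ _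
    have := Finset.card_le_card h1
    rw [hd]; simpa [hammingDist] using this
  split_ifs <;> ring_nf <;> omega

/-- number of codewords at Hamming distance `w` from `v`. -/
noncomputable def fc (C : Set (Fin n → Fin q)) (w : ℕ) (v : Fin n → Fin q) : ℕ :=
  #(C.toFinite.toFinset.filter fun c => hammingDist v c = w)

lemma recurrence (C : Set (Fin n → Fin q)) (v : Fin n → Fin q) (w : ℕ) (hw : 1 ≤ w) :
    ∑ u ∈ ({u | hammingDist v u = 1} : Finset (Fin n → Fin q)), fc C w u
      = (n - (w - 1)) * (q - 1) * fc C (w - 1) v + (w + 1) * fc C (w + 1) v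
        + w * (q - 2) * fc C w v := by
  classical
  have step1 : ∀ u, fc C w u
      = ∑ c ∈ C.toFinite.toFinset, if hammingDist u c = w then 1 else 0 := by
    intro u
    rw [fc, Finset.card_filter]
  rw [Finset.sum_congr rfl fun u _ => step1 u, Finset.sum_comm]
  have step2 : ∀ c, (∑ u ∈ ({u | hammingDist v u = 1} : Finset (Fin n → Fin q)),
      if hammingDist u c = w then 1 else 0)
      = #{u | hammingDist v u = 1 ∧ hammingDist u c = w} := by
    intro c
    rw [← Finset.card_filter, Finset.filter_filter]
  rw [Finset.sum_congr rfl fun c _ => step2 c,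
    Finset.sum_congr rfl fun c _ => card_nbr_dist v c w]
  rw [Finset.sum_add_distrib, Finset.sum_add_distrib]
  have e1 : (∑ c ∈ C.toFinite.toFinset,
      if hammingDist v c + 1 = w then (n - hammingDist v c) * (q - 1) else 0)
      = (n - (w - 1)) * (q - 1) * fc C (w - 1) v := by
    have h : (∑ c ∈ C.toFinite.toFinset,
        if hammingDist v c + 1 = w then (n - hammingDist v c) * (q - 1) else 0)
        = ∑ c ∈ C.toFinite.toFinset,
          if hammingDist v c = w - 1 then (n - (w - 1)) * (q - 1) else 0 := by
      apply Finset.sum_congr rfl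
      intro c _
      by_cases h : hammingDist v c + 1 = w
      · rw [if_pos h, if_pos (by omega)]
        congr 2
        omega
      · rw [if_neg h, if_neg (by omega)]
    rw [h, Finset.sum_ite, Finset.sum_const, Finset.sum_const_zero, add_zero,
      smul_eq_mul, mul_comm, fc]
  have e2 : (∑ c ∈ C.toFinite.toFinset,
      if hammingDist v c = w + 1 then hammingDist v c else 0)
      = (w + 1) * fc C (w + 1) v := by
    have h : (∑ c ∈ C.toFinite.toFinset,
        if hammingDist v c = w + 1 then hammingDist v c else 0)
        = ∑ c ∈ C.toFinite.toFinset, if hammingDist v c = w + 1 then w + 1 else 0 := by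
      apply Finset.sum_congr rfl
      intro c _
      by_cases h : hammingDist v c = w + 1
      · rw [if_pos h, if_pos h, h]
      · rw [if_neg h, if_neg h]
    rw [h, Finset.sum_ite, Finset.sum_const, Finset.sum_const_zero, add_zero,
      smul_eq_mul, mul_comm, fc]
  have e3 : (∑ c ∈ C.toFinite.toFinset,
      if hammingDist v c = w then hammingDist v c * (q - 2) else 0)
      = w * (q - 2) * fc C w v := by
    have h : (∑ c ∈ C.toFinite.toFinset,
        if hammingDist v c = w then hammingDist v c * (q - 2) else 0)
        = ∑ c ∈ C.toFinite.toFinset, if hammingDist v c = w then w * (q - 2) else 0 := by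
      apply Finset.sum_congr rfl
      intro c _
      by_cases h : hammingDist v c = w
      · rw [if_pos h, if_pos h, h]
      · rw [if_neg h, if_neg h]
    rw [h, Finset.sum_ite, Finset.sum_const, Finset.sum_const_zero, add_zero,
      smul_eq_mul, mul_comm, fc]
  rw [e1, e2, e3]

lemma exists_hamming_walk (x y : Fin n → Fin q) :
    ∃ p : (hammingGraph n (Fin q)).Walk x y, p.length = hammingDist x y := by
  generalize hd : hammingDist x y = d
  induction d generalizing x with
  | zero =>
    obtain rfl : x = y := hammingDist_eq_zero.1 hd
    exact ⟨SimpleGraph.Walk.nil, rfl⟩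
  | succ d ih =>
    have hxy : x ≠ y := by
      intro h; rw [h, hammingDist_self] at hd; omega
    obtain ⟨i, hi⟩ := Function.ne_iff.1 hxy
    set x' := Function.update x i (y i) with hx'
    have hadj : (hammingGraph n (Fin q)).Adj x x' :=
      hammingDist_update_self (fun h => hi h.symm)
    have hless : hammingDist x' y = d := by
      have h2 := hammingDist_update_of_ne_eq (a := y i) hi rfl
      rw [← hx'] at h2
      omega
    obtain ⟨p, hp⟩ := ih x' hless
    exact ⟨SimpleGraph.Walk.cons hadj p, by simp [hp]⟩

lemma hamming_le_walk_length {x y : Fin n → Fin q}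
    (p : (hammingGraph n (Fin q)).Walk x y) : hammingDist x y ≤ p.length := by
  induction p with
  | nil => simp
  | cons h p ih =>
    rename_i u v w
    calc hammingDist u w ≤ hammingDist u v + hammingDist v w := hammingDist_triangle _ _ _
    _ ≤ 1 + p.length := by
        have : hammingDist u v = 1 := h
        omega
    _ = (SimpleGraph.Walk.cons h p).length := by simp [add_comm]

lemma hamming_dist_eq (x y : Fin n → Fin q) :
    (hammingGraph n (Fin q)).dist x y = hammingDist x y := by
  obtain ⟨p, hp⟩ := exists_hamming_walk x y
  refine le_antisymm (hp ▸ SimpleGraph.dist_le p) ?_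
  have hr : (hammingGraph n (Fin q)).Reachable x y := ⟨p⟩
  obtain ⟨p', hp'⟩ := hr.exists_walk_length_eq_dist
  exact hp' ▸ hamming_le_walk_length p'

lemma sum_level_split {α : Type*} [DecidableEq α] (s : Finset α) (F Lf : α → ℕ)
    (g0 g1 g2 g3 : ℕ)
    (h : ∀ u ∈ s, F u = (if Lf u = 0 then g0 else 0) + (if Lf u = 1 then g1 else 0)
      + (if Lf u = 2 then g2 else 0) + (if Lf u = 3 then g3 else 0)) :
    ∑ u ∈ s, F u
      = g0 * #(s.filter fun u => Lf u = 0) + g1 * #(s.filter fun u => Lf u = 1)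
        + g2 * #(s.filter fun u => Lf u = 2) + g3 * #(s.filter fun u => Lf u = 3) := by
  rw [Finset.sum_congr rfl h, Finset.sum_add_distrib, Finset.sum_add_distrib,
    Finset.sum_add_distrib]
  rw [Finset.sum_ite, Finset.sum_ite, Finset.sum_ite, Finset.sum_ite]
  simp [mul_comm]

end CRCAux

open CRCAux Finset

/-- There is no completely regular code with intersection array `{36,28,4; 1,2,24}` in
any Hamming graph `H(n,q)` with `q ∈ {2,3,4,5,7,10,13}` and degree `(q-1)n = 36`
(in each case the matrix `K_3(K_1⁻¹(S))` has a non-integer entry). -/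
theorem no_crc_36_28_4 (q n : ℕ) (hq : q ∈ ({2, 3, 4, 5, 7, 10, 13} : Set ℕ))
    (hn : (q - 1) * n = 36)
    (C : Set (Fin n → Fin q)) (β γ : ℕ → ℕ)
    (hβ0 : β 0 = 36) (hβ1 : β 1 = 28) (hβ2 : β 2 = 4)
    (hγ1 : γ 1 = 1) (hγ2 : γ 2 = 2) (hγ3 : γ 3 = 24) :
    ¬ IsCompletelyRegular (hammingGraph n (Fin q)) C 3 β γ := by

  classical
  intro hcr
  obtain ⟨hCne, hle3, -, hβax, hγax⟩ := hcr
  have hq2 : 2 ≤ q := by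
    simp only [Set.mem_insert_iff, Set.mem_singleton_iff] at hq
    rcases hq with rfl|rfl|rfl|rfl|rfl|rfl|rfl <;> norm_num
  have hn36 : n * (q - 1) = 36 := by rw [mul_comm]; exact hn
  set Γ := hammingGraph n (Fin q) with hΓ
  set L : (Fin n → Fin q) → ℕ := fun v => distTo Γ C v with hL
  -- basic facts about L
  have himg : ∀ v : Fin n → Fin q, Γ.dist v '' C = (fun c => hammingDist v c) '' C := by
    intro v
    exact Set.image_congr fun c _ => hamming_dist_eq v c
  have hattain : ∀ v, ∃ c ∈ C, hammingDist v c = L v := by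
    intro v
    have h : L v ∈ (fun c => hammingDist v c) '' C := by
      have : L v = sInf ((fun c => hammingDist v c) '' C) := by
        rw [hL]; simp only [distTo, himg v]
      rw [this]
      exact Nat.sInf_mem (hCne.image _)
    obtain ⟨c, hc, hceq⟩ := h
    exact ⟨c, hc, hceq⟩
  have hlb : ∀ v c, c ∈ C → L v ≤ hammingDist v c := by
    intro v c hc
    have h : L v = sInf ((fun c => hammingDist v c) '' C) := by
      rw [hL]; simp only [distTo, himg v]
    rw [h]
    exact Nat.sInf_le ⟨c, hc, rfl⟩
  have hmem0 : ∀ v, v ∈ C → L v = 0 := fun v hv =>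
    le_antisymm (by simpa [hammingDist_self] using hlb v v hv) (Nat.zero_le _)
  have hmem0' : ∀ v, L v = 0 → v ∈ C := by
    intro v hv
    obtain ⟨c, hc, hceq⟩ := hattain v
    rw [hv] at hceq
    rwa [hammingDist_eq_zero.1 hceq]
  have hlip : ∀ v u : Fin n → Fin q, hammingDist v u = 1 → L u ≤ L v + 1 := by
    intro v u hvu
    obtain ⟨c, hc, hceq⟩ := hattain v
    have h1 := hlb u c hc
    have htri := hammingDist_triangle u v c
    have h2 : hammingDist u v = 1 := by rw [hammingDist_comm]; exact hvu
    omega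
  have hlip' : ∀ v u : Fin n → Fin q, hammingDist v u = 1 → L v ≤ L u + 1 := by
    intro v u hvu
    obtain ⟨c, hc, hceq⟩ := hattain u
    have h1 := hlb v c hc
    have htri := hammingDist_triangle v u c
    omega
  -- the β/γ axioms in Finset form
  have hA : ∀ (v : Fin n → Fin q) (j : ℕ),
      {u | Γ.Adj v u ∧ distTo Γ C u = j}.ncard
        = #({u | hammingDist v u = 1 ∧ L u = j} : Finset (Fin n → Fin q)) := by
    intro v j
    rw [← Set.ncard_coe_finset]
    congr 1
    ext u
    simp only [Finset.coe_filter, Finset.mem_univ, true_and, Set.mem_setOf_eq]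
    constructor
    · rintro ⟨h1, h2⟩; exact ⟨h1, h2⟩
    · rintro ⟨h1, h2⟩; exact ⟨h1, h2⟩
  have hBc : ∀ v t, L v = t → t < 3 →
      #({u | hammingDist v u = 1 ∧ L u = t + 1} : Finset (Fin n → Fin q)) = β t := by
    intro v t h1 h2
    rw [← hA]
    exact hβax v t h1 h2
  have hGc : ∀ v t, L v = t → 0 < t →
      #({u | hammingDist v u = 1 ∧ L u = t - 1} : Finset (Fin n → Fin q)) = γ t := by
    intro v t h1 h2
    rw [← hA]
    exact hγax v t h1 h2
  -- degree
  have hdeg : ∀ v : Fin n → Fin q,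
      #({u | hammingDist v u = 1} : Finset (Fin n → Fin q)) = 36 := by
    intro v
    have h1 : #({u | hammingDist v u = 1 ∧ True} : Finset (Fin n → Fin q))
        = ∑ i : Fin n, #({a : Fin q | a ≠ v i ∧ True} : Finset (Fin q)) :=
      card_nbr v (fun _ => True)
    simp only [and_true] at h1
    rw [h1, Finset.sum_congr rfl fun i _ => card_fin_ne (v i), Finset.sum_const,
      Finset.card_univ, Fintype.card_fin, smul_eq_mul, hn36]
  -- neighbours partitioned by level
  have hfib : ∀ v : Fin n → Fin q,
      #({u | hammingDist v u = 1 ∧ L u = 0} : Finset (Fin n → Fin q))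
      + #({u | hammingDist v u = 1 ∧ L u = 1} : Finset (Fin n → Fin q))
      + #({u | hammingDist v u = 1 ∧ L u = 2} : Finset (Fin n → Fin q))
      + #({u | hammingDist v u = 1 ∧ L u = 3} : Finset (Fin n → Fin q)) = 36 := by
    intro v
    have h := Finset.card_eq_sum_card_fiberwise
      (s := ({u | hammingDist v u = 1} : Finset (Fin n → Fin q)))
      (t := Finset.range 4) (f := L)
      (fun u _ => by
        have h3 : L u ≤ 3 := hle3 u
        simp only [Finset.mem_coe, Finset.mem_range]
        omega)
    rw [hdeg v] at h
    rw [Finset.sum_range_succ, Finset.sum_range_succ, Finset.sum_range_succ,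
      Finset.sum_range_one] at h
    simp only [Finset.filter_filter] at h
    omega
  have hempty : ∀ (v : Fin n → Fin q) t j, L v = t → (t + 2 ≤ j ∨ j + 2 ≤ t) →
      #({u | hammingDist v u = 1 ∧ L u = j} : Finset (Fin n → Fin q)) = 0 := by
    intro v t j ht hj
    rw [Finset.card_eq_zero, Finset.filter_eq_empty_iff]
    intro u _
    rintro ⟨h1, h2⟩
    have := hlip v u h1
    have := hlip' v u h1
    omega
  -- f_0 and f_1
  have hf0 : ∀ v : Fin n → Fin q, fc C 0 v = if L v = 0 then 1 else 0 := by
    intro v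
    by_cases hv : L v = 0
    · rw [if_pos hv, fc]
      have h : (C.toFinite.toFinset.filter fun c => hammingDist v c = 0) = {v} := by
        ext c
        simp only [Finset.mem_filter, Set.Finite.mem_toFinset, Finset.mem_singleton]
        rw [hammingDist_eq_zero]
        constructor
        · rintro ⟨_, h2⟩; exact h2.symm
        · intro h2; refine ⟨?_, h2.symm⟩; rw [h2]; exact hmem0' v hv
      rw [h, Finset.card_singleton]
    · rw [if_neg hv, fc, Finset.card_eq_zero, Finset.filter_eq_empty_iff]
      intro c hc hdist
      rw [Set.Finite.mem_toFinset] at hc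
      obtain rfl : v = c := hammingDist_eq_zero.1 hdist
      exact hv (hmem0 v hc)
  have hf1eq : ∀ v : Fin n → Fin q,
      fc C 1 v = #({u | hammingDist v u = 1 ∧ L u = 0} : Finset (Fin n → Fin q)) := by
    intro v
    rw [fc]
    congr 1
    ext c
    simp only [Finset.mem_filter, Set.Finite.mem_toFinset, Finset.mem_univ, true_and]
    constructor
    · rintro ⟨hc, h1⟩; exact ⟨h1, hmem0 c hc⟩
    · rintro ⟨h1, h0⟩; exact ⟨hmem0' c h0, h1⟩
  have hf1 : ∀ v : Fin n → Fin q, fc C 1 v = if L v = 1 then 1 else 0 := by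
    intro v
    rw [hf1eq v]
    by_cases hv : L v = 1
    · rw [if_pos hv]
      have h1 := hGc v 1 hv (by norm_num)
      rw [hγ1] at h1
      simpa using h1
    · rw [if_neg hv]
      rcases Nat.lt_or_ge (L v) 1 with h | h
      · -- L v = 0
        have hv0 : L v = 0 := by omega
        have hb := hBc v 0 hv0 (by norm_num)
        rw [hβ0] at hb
        norm_num at hb
        have hfb := hfib v
        have he2 := hempty v 0 2 hv0 (by omega)
        have he3 := hempty v 0 3 hv0 (by omega)
        omega
      · -- L v ≥ 2
        exact hempty v (L v) 0 rfl (by omega)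
  -- key identity from the w = 1 recurrence
  have hkey1 : ∀ v : Fin n → Fin q,
      #({u | hammingDist v u = 1 ∧ L u = 1} : Finset (Fin n → Fin q))
        = n * (q - 1) * fc C 0 v + 2 * fc C 2 v + (q - 2) * fc C 1 v := by
    intro v
    have hrec := recurrence C v 1 le_rfl
    simp only [Nat.sub_self, Nat.sub_zero] at hrec
    have hsum : (∑ u ∈ ({u | hammingDist v u = 1} : Finset (Fin n → Fin q)), fc C 1 u)
        = #({u | hammingDist v u = 1 ∧ L u = 1} : Finset (Fin n → Fin q)) := by
      rw [Finset.sum_congr rfl fun u _ => hf1 u, Finset.sum_ite, Finset.sum_const,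
        Finset.sum_const_zero, add_zero, smul_eq_mul, mul_one, Finset.filter_filter]
    rw [hsum] at hrec
    rw [hrec]
    ring
  -- f_2 at the various levels
  have hf2_0 : ∀ v : Fin n → Fin q, L v = 0 → fc C 2 v = 0 := by
    intro v hv
    have hk := hkey1 v
    have hb := hBc v 0 hv (by norm_num)
    rw [hβ0] at hb
    norm_num at hb
    rw [hb, hf0 v, hf1 v, if_pos hv, if_neg (by omega), hn36] at hk
    omega
  have hf2_2 : ∀ v : Fin n → Fin q, L v = 2 → fc C 2 v = 1 := by
    intro v hv
    have hk := hkey1 v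
    have hg := hGc v 2 hv (by norm_num)
    rw [hγ2] at hg
    norm_num at hg
    rw [hg, hf0 v, hf1 v, if_neg (by omega), if_neg (by omega)] at hk
    omega
  have hf2_3 : ∀ v : Fin n → Fin q, L v = 3 → fc C 2 v = 0 := by
    intro v hv
    have hk := hkey1 v
    have he := hempty v 3 1 hv (by omega)
    rw [he, hf0 v, hf1 v, if_neg (by omega), if_neg (by omega)] at hk
    omega
  have hf2_1 : ∀ v : Fin n → Fin q, L v = 1 → 2 * fc C 2 v + (q - 2) = 7 := by
    intro v hv
    have hk := hkey1 v
    have hg := hGc v 1 hv (by norm_num)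
    rw [hγ1] at hg
    norm_num at hg
    have hb := hBc v 1 hv (by norm_num)
    rw [hβ1] at hb
    norm_num at hb
    have he3 := hempty v 1 3 hv (by omega)
    have hsum := hfib v
    have hA1 : #({u | hammingDist v u = 1 ∧ L u = 1} : Finset (Fin n → Fin q)) = 7 := by
      omega
    rw [hA1, hf0 v, hf1 v, if_neg (by omega), if_pos hv] at hk
    omega
  -- a vertex at level 1 exists
  obtain ⟨c0, hc0⟩ := hCne
  have hc0L : L c0 = 0 := hmem0 c0 hc0
  have hb0 := hBc c0 0 hc0L (by norm_num)
  rw [hβ0] at hb0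
  have hv1ex : ∃ v1 : Fin n → Fin q, L v1 = 1 := by
    have hpos : 0 < #({u | hammingDist c0 u = 1 ∧ L u = 0 + 1} : Finset (Fin n → Fin q)) := by
      rw [hb0]; norm_num
    obtain ⟨u, hu⟩ := Finset.card_pos.1 hpos
    rw [Finset.mem_filter] at hu
    exact ⟨u, hu.2.2⟩
  obtain ⟨v1, hv1⟩ := hv1ex
  -- cases on q
  simp only [Set.mem_insert_iff, Set.mem_singleton_iff] at hq
  -- the easy cases: w = 1 recurrence already fails at a level-1 vertex
  rcases hq with rfl|rfl|rfl|rfl|rfl|rfl|rfl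
  · exact absurd (hf2_1 v1 hv1) (by omega)
  · -- q = 3, n = 18 : use the w = 2 recurrence at a level-2 vertex
    obtain rfl : n = 18 := by omega
    have hb1 := hBc v1 1 hv1 (by norm_num)
    rw [hβ1] at hb1
    norm_num at hb1
    have hv2ex : ∃ v2 : Fin 18 → Fin 3, L v2 = 2 := by
      have hpos : 0 < #({u | hammingDist v1 u = 1 ∧ L u = 2} : Finset (Fin 18 → Fin 3)) := by
        rw [hb1]; norm_num
      obtain ⟨u, hu⟩ := Finset.card_pos.1 hpos
      rw [Finset.mem_filter] at hu
      exact ⟨u, hu.2.2⟩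
    obtain ⟨v2, hv2⟩ := hv2ex
    have hpt : ∀ u ∈ ({u | hammingDist v2 u = 1} : Finset (Fin 18 → Fin 3)), fc C 2 u
        = (if L u = 0 then 0 else 0) + (if L u = 1 then 3 else 0)
          + (if L u = 2 then 1 else 0) + (if L u = 3 then 0 else 0) := by
      intro u _
      have h3 : L u ≤ 3 := hle3 u
      have h4 : L u = 0 ∨ L u = 1 ∨ L u = 2 ∨ L u = 3 := by omega
      rcases h4 with h|h|h|h <;> rw [h] <;> norm_num
      · exact hf2_0 u h
      · have := hf2_1 u h; omega
      · exact hf2_2 u h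
      · exact hf2_3 u h
    have hsum2 := sum_level_split ({u | hammingDist v2 u = 1} : Finset (Fin 18 → Fin 3))
      (fc C 2) L 0 3 1 0 hpt
    simp only [Finset.filter_filter] at hsum2
    have hrec := recurrence C v2 2 (by norm_num)
    rw [hsum2] at hrec
    norm_num at hrec
    have hg := hGc v2 2 hv2 (by norm_num)
    rw [hγ2] at hg
    norm_num at hg
    have hb := hBc v2 2 hv2 (by norm_num)
    rw [hβ2] at hb
    norm_num at hb
    have he0 := hempty v2 2 0 hv2 (by omega)
    have hsum := hfib v2
    have hfc1 : fc C 1 v2 = 0 := by rw [hf1 v2, if_neg (by omega)]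
    have hfc2 := hf2_2 v2 hv2
    omega
  · exact absurd (hf2_1 v1 hv1) (by omega)
  · -- q = 5, n = 9 : w = 2 recurrence at a level-1 vertex
    obtain rfl : n = 9 := by omega
    have hpt : ∀ u ∈ ({u | hammingDist v1 u = 1} : Finset (Fin 9 → Fin 5)), fc C 2 u
        = (if L u = 0 then 0 else 0) + (if L u = 1 then 2 else 0)
          + (if L u = 2 then 1 else 0) + (if L u = 3 then 0 else 0) := by
      intro u _
      have h3 : L u ≤ 3 := hle3 u
      have h4 : L u = 0 ∨ L u = 1 ∨ L u = 2 ∨ L u = 3 := by omega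
      rcases h4 with h|h|h|h <;> rw [h] <;> norm_num
      · exact hf2_0 u h
      · have := hf2_1 u h; omega
      · exact hf2_2 u h
      · exact hf2_3 u h
    have hsum2 := sum_level_split ({u | hammingDist v1 u = 1} : Finset (Fin 9 → Fin 5))
      (fc C 2) L 0 2 1 0 hpt
    simp only [Finset.filter_filter] at hsum2
    have hrec := recurrence C v1 2 (by norm_num)
    rw [hsum2] at hrec
    norm_num at hrec
    have hg := hGc v1 1 hv1 (by norm_num)
    rw [hγ1] at hg
    norm_num at hg
    have hb := hBc v1 1 hv1 (by norm_num)
    rw [hβ1] at hb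
    norm_num at hb
    have he3 := hempty v1 1 3 hv1 (by omega)
    have hsum := hfib v1
    have hfc1 : fc C 1 v1 = 1 := by rw [hf1 v1, if_pos hv1]
    have hfc2 := hf2_1 v1 hv1
    omega
  · -- q = 7, n = 6
    obtain rfl : n = 6 := by omega
    have hpt : ∀ u ∈ ({u | hammingDist v1 u = 1} : Finset (Fin 6 → Fin 7)), fc C 2 u
        = (if L u = 0 then 0 else 0) + (if L u = 1 then 1 else 0)
          + (if L u = 2 then 1 else 0) + (if L u = 3 then 0 else 0) := by
      intro u _
      have h3 : L u ≤ 3 := hle3 u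
      have h4 : L u = 0 ∨ L u = 1 ∨ L u = 2 ∨ L u = 3 := by omega
      rcases h4 with h|h|h|h <;> rw [h] <;> norm_num
      · exact hf2_0 u h
      · have := hf2_1 u h; omega
      · exact hf2_2 u h
      · exact hf2_3 u h
    have hsum2 := sum_level_split ({u | hammingDist v1 u = 1} : Finset (Fin 6 → Fin 7))
      (fc C 2) L 0 1 1 0 hpt
    simp only [Finset.filter_filter] at hsum2
    have hrec := recurrence C v1 2 (by norm_num)
    rw [hsum2] at hrec
    norm_num at hrec
    have hg := hGc v1 1 hv1 (by norm_num)
    rw [hγ1] at hg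
    norm_num at hg
    have hb := hBc v1 1 hv1 (by norm_num)
    rw [hβ1] at hb
    norm_num at hb
    have he3 := hempty v1 1 3 hv1 (by omega)
    have hsum := hfib v1
    have hfc1 : fc C 1 v1 = 1 := by rw [hf1 v1, if_pos hv1]
    have hfc2 := hf2_1 v1 hv1
    omega
  · exact absurd (hf2_1 v1 hv1) (by omega)
  · exact absurd (hf2_1 v1 hv1) (by omega)
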